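/- Let r ≥ 2 be an integer and λ ∈ (0, 4^r) a real number with λ^{1/(2r)} ≤ 1/4. Let k ∈ {0,1,…,r−1} and let ρ ∈ ℂ be a root of the quadratic q_k(x) = −(1−x)² − λ^{1/r} e^{2kπi/r} x. If r is even and k = r/2, then ρ is real (its imaginary part is 0). Otherwise, |Im ρ| ≥ (sin(π/(2r))/25) · λ^{1/(2r)} · |ρ|; that is, |sin(arg ρ)| ≥ λ^{1/(2r)} sin(π/(2r))/25. -/

import Mathlib

/-- The quadratic factor `q_k(x) = -(1-x)² - λ^{1/r} e^{2kπi/r} x` of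
`p(x) = (1-x)^{2r} - (-1)^r λ x^r`. -/
noncomputable def qfac (r : ℕ) (lam : ℝ) (k : ℕ) (x : ℂ) : ℂ :=
  -(1 - x) ^ 2 -
    ((lam ^ ((r : ℝ)⁻¹) : ℝ) : ℂ) *
      Complex.exp (2 * (k : ℂ) * (Real.pi : ℂ) * Complex.I / (r : ℂ)) * x

/-- Monotonicity-type lower bound for `sin` on `[y, π - y]`. -/
lemma sin_min_bound {y x : ℝ} (hy0 : 0 ≤ y) (hyx : y ≤ x) (hx : x ≤ Real.pi - y) :
    Real.sin y ≤ Real.sin x := by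
  have hy2 : y ≤ Real.pi / 2 := by linarith
  rcases le_or_gt x (Real.pi / 2) with h | h
  · exact Real.strictMonoOn_sin.monotoneOn ⟨by linarith, hy2⟩ ⟨by linarith, h⟩ hyx
  · rw [← Real.sin_pi_sub x]
    exact Real.strictMonoOn_sin.monotoneOn ⟨by linarith, hy2⟩ ⟨by linarith, by linarith⟩
      (by linarith)

/-- The key quantitative estimate extracted from the identity
`b²((μ²-4μc)X + 4b²) = μ²s²X²`. -/
lemma keyineq {mu c s b X : ℝ} (hmu0 : 0 < mu) (hmu : mu ≤ 1/16)
    (hc : -1 ≤ c) (hX : 0 < X) (hs : s^2 ≤ 1)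
    (hK : b^2*((mu^2-4*mu*c)*X + 4*b^2) = mu^2*s^2*X^2) :
    mu*s^2*X/7 ≤ b^2 := by
  rcases le_or_gt (mu^2 - 4*mu*c) 0 with hA | hA
  · have h1 : mu^2*s^2*X^2 ≤ 4*b^4 := by
      nlinarith [sq_nonneg b, mul_nonpos_of_nonpos_of_nonneg
        (mul_nonpos_of_nonpos_of_nonneg hA hX.le) (sq_nonneg b)]
    nlinarith [sq_nonneg (mu*s^2*X - 2*b^2), sq_nonneg s, sq_nonneg (s*b),
      mul_pos hmu0 hX, sq_nonneg (mu*s*X - 2*b^2), sq_nonneg (mu*s*X + 2*b^2),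
      mul_nonneg (mul_nonneg hmu0.le (sq_nonneg s)) hX.le]
  · by_contra hlt
    push_neg at hlt
    have hA2 : mu^2 - 4*mu*c ≤ 65/16*mu := by nlinarith
    have hq : (0:ℝ) ≤ mu*s^2*X/7 := by positivity
    have hAX : 0 < (mu^2-4*mu*c)*X := mul_pos hA hX
    have h3 : b^2*((mu^2-4*mu*c)*X) ≤ (mu*s^2*X/7)*((65/16*mu)*X) := by
      calc b^2*((mu^2-4*mu*c)*X) ≤ (mu*s^2*X/7)*((mu^2-4*mu*c)*X) :=
            mul_le_mul_of_nonneg_right hlt.le hAX.le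
        _ ≤ (mu*s^2*X/7)*((65/16*mu)*X) := by
            exact mul_le_mul_of_nonneg_left (mul_le_mul_of_nonneg_right hA2 hX.le) hq
    have h4 : 4*b^4 ≤ 4*(mu*s^2*X/7)^2 := by nlinarith
    have hs0 : 0 < s^2 := by
      rcases eq_or_lt_of_le (sq_nonneg s) with h | h
      · exfalso; nlinarith [sq_nonneg b]
      · exact h
    nlinarith [mul_pos (mul_pos (mul_pos hmu0 hmu0) hs0) (mul_pos hX hX), sq_nonneg s]

set_option maxHeartbeats 2000000 in
/-- For `r ≥ 2`, `λ ∈ (0, 4^r)` with `λ^{1/(2r)} ≤ 1/4`, and `k ∈ {0,…,r-1}`: if `r` is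
even and `k = r/2`, every root of `q_k` is real; otherwise every root `ρ` of `q_k`
satisfies `|Im ρ| ≥ (sin(π/(2r))/25) · λ^{1/(2r)} · |ρ|`. -/
theorem qfac_root_imaginary_part_bound
    (r : ℕ) (hr : 2 ≤ r) (lam : ℝ) (hlam0 : 0 < lam) (hlam4 : lam < 4 ^ r)
    (hsmall : lam ^ ((2 * (r : ℝ))⁻¹) ≤ 1 / 4)
    (k : ℕ) (hk : k < r) (ρ : ℂ) (hρ : qfac r lam k ρ = 0) :
    (Even r ∧ 2 * k = r → ρ.im = 0) ∧
    (¬(Even r ∧ 2 * k = r) →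
      Real.sin (Real.pi / (2 * r)) / 25 * lam ^ ((2 * (r : ℝ))⁻¹) * ‖ρ‖ ≤
        |ρ.im|) := by
  have hr0 : (r : ℝ) ≠ 0 := by positivity
  have hrpos : (0:ℝ) < r := by positivity
  have hpi : (0:ℝ) < Real.pi := Real.pi_pos
  have hr2 : (2:ℝ) ≤ (r:ℝ) := by exact_mod_cast hr
  set sl : ℝ := lam ^ ((2 * (r : ℝ))⁻¹) with hsl_def
  set mu : ℝ := lam ^ ((r : ℝ)⁻¹) with hmu_def
  have hsl0 : 0 < sl := Real.rpow_pos_of_pos hlam0 _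
  have hmusq : sl ^ 2 = mu := by
    rw [hsl_def, hmu_def, ← Real.rpow_natCast (lam ^ ((2*(r:ℝ))⁻¹)) 2,
      ← Real.rpow_mul hlam0.le]
    congr 1
    push_cast
    field_simp
  have hmu0 : 0 < mu := Real.rpow_pos_of_pos hlam0 _
  have hmu16 : mu ≤ 1/16 := by nlinarith
  set θ : ℝ := 2 * Real.pi * k / r with hθ_def
  have harg : 2 * (k : ℂ) * (Real.pi : ℂ) * Complex.I / (r : ℂ) = (θ : ℂ) * Complex.I := by
    rw [hθ_def]; push_cast; field_simp
  have hexp : Complex.exp (2 * (k : ℂ) * (Real.pi : ℂ) * Complex.I / (r : ℂ))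
      = (Real.cos θ : ℂ) + (Real.sin θ : ℂ) * Complex.I := by
    rw [harg, Complex.exp_mul_I, Complex.ofReal_cos, Complex.ofReal_sin]
  rw [qfac, hexp, ← hmu_def] at hρ
  set a : ℝ := ρ.re with ha
  set b : ℝ := ρ.im with hb
  rw [Complex.ext_iff] at hρ
  obtain ⟨h1, h2⟩ := hρ
  simp [pow_two, Complex.mul_re, Complex.mul_im, Complex.sub_re, Complex.sub_im,
    Complex.add_re, Complex.add_im, Complex.one_re, Complex.one_im,
    Complex.ofReal_re, Complex.ofReal_im, Complex.I_re, Complex.I_im,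
    Complex.cos_ofReal_re, Complex.sin_ofReal_re] at h1 h2
  set c : ℝ := Real.cos θ with hc_def
  set s : ℝ := Real.sin θ with hs_def
  have hE1 : a^2 - b^2 + 1 - (2 - mu*c)*a - mu*s*b = 0 := by linear_combination -h1
  have hE2 : 2*a*b - (2 - mu*c)*b + mu*s*a = 0 := by linear_combination -h2
  clear h1 h2 harg hexp hlam4 hsmall
  have hN : b*(a^2+b^2-1) = -(mu*s*(a^2+b^2)) := by linear_combination a*hE2 - b*hE1
  have hM : (a^2+b^2+1)^2 - 4*b^2 = ((2-mu*c)^2 + mu^2*s^2)*(a^2+b^2) := by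
    linear_combination (a^2-b^2+1+(2-mu*c)*a+mu*s*b)*hE1 + (2*a*b+(2-mu*c)*b-mu*s*a)*hE2
  have htrig : c^2 + s^2 = 1 := by
    rw [add_comm]; exact Real.sin_sq_add_cos_sq θ
  have hK : b^2*((mu^2-4*mu*c)*(a^2+b^2) + 4*b^2) = mu^2*s^2*(a^2+b^2)^2 := by
    linear_combination (-(b^2))*hM + (b*(a^2+b^2-1) - mu*s*(a^2+b^2))*hN
      + (-(mu^2*b^2*(a^2+b^2)))*htrig
  clear_value sl mu θ a b c s
  have hX : 0 < a^2 + b^2 := by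
    by_contra h
    push_neg at h
    have ha2 : a^2 = 0 := le_antisymm (by linarith [sq_nonneg b]) (sq_nonneg a)
    have hb2 : b^2 = 0 := le_antisymm (by linarith [sq_nonneg a]) (sq_nonneg b)
    have ha0 : a = 0 := sq_eq_zero_iff.mp ha2
    have hb0 : b = 0 := sq_eq_zero_iff.mp hb2
    rw [ha0, hb0] at hE1
    norm_num at hE1
  constructor
  · -- even case: θ = π, root is real
    rintro ⟨hev, h2k⟩
    have hθπ : θ = Real.pi := by
      rw [hθ_def]
      have h2kR : 2*(k:ℝ) = (r:ℝ) := by exact_mod_cast congrArg (Nat.cast : ℕ → ℝ) h2k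
      field_simp
      linear_combination h2kR
    have hcπ : c = -1 := by rw [hc_def, hθπ, Real.cos_pi]
    have hsπ : s = 0 := by rw [hs_def, hθπ, Real.sin_pi]
    rw [hcπ, hsπ] at hE1 hE2
    by_contra hb0
    have hb2 : 0 < b^2 := by positivity
    have hfac : b * (2*a - (2+mu)) = 0 := by linear_combination hE2
    have h2a : 2*a - (2+mu) = 0 := (mul_eq_zero.mp hfac).resolve_left hb0
    clear hN hM htrig hK
    nlinarith [hE1, hmu0, hb2, h2a]
  · -- generic case
    intro hne
    have h2k : 2 * k ≠ r := fun h => hne ⟨⟨k, by omega⟩, h⟩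
    set m : ℝ := Real.sin (Real.pi / (2 * r)) with hm_def
    clear_value m
    have hm0 : 0 < m := by
      rw [hm_def]
      apply Real.sin_pos_of_pos_of_lt_pi
      · positivity
      · rw [div_lt_iff₀ (by positivity)]
        nlinarith [mul_pos hpi (show (0:ℝ) < 2*(r:ℝ)-1 by linarith)]
    have hm1 : m ≤ 1 := hm_def ▸ Real.sin_le_one _
    -- main bound: mu * m^2 * X / 625 ≤ b^2
    clear hM hN htrig hE2
    have hbb : mu * m^2 * (a^2+b^2) / 625 ≤ b^2 := by
      rcases Nat.eq_zero_or_pos k with hk0 | hk1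
      · -- k = 0 : θ = 0
        have hθ0 : θ = 0 := by rw [hθ_def, hk0]; simp
        have hc1 : c = 1 := by rw [hc_def, hθ0, Real.cos_zero]
        have hs0 : s = 0 := by rw [hs_def, hθ0, Real.sin_zero]
        rw [hc1, hs0] at hE1 hK
        have hbne : b ≠ 0 := by
          intro h
          rw [h] at hE1
          nlinarith [sq_nonneg (2*a - (2-mu)), hmu0, hmu16]
        have hb2 : 0 < b^2 := by positivity
        have hzero : (mu^2-4*mu*1)*(a^2+b^2) + 4*b^2 = 0 := by
          rcases mul_eq_zero.mp (by linear_combination hK : b^2*((mu^2-4*mu*1)*(a^2+b^2) + 4*b^2) = 0) with h | h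
          · exact absurd h (by positivity)
          · exact h
        have f1 : mu*(mu*(a^2+b^2)) ≤ (1/16)*(mu*(a^2+b^2)) :=
          mul_le_mul_of_nonneg_right hmu16 (mul_pos hmu0 hX).le
        have f2 : (mu*(a^2+b^2))*m^2 ≤ (mu*(a^2+b^2))*1 := by
          apply mul_le_mul_of_nonneg_left _ (mul_pos hmu0 hX).le
          nlinarith [hm1, hm0.le]
        nlinarith [hzero, f1, f2, mul_pos hmu0 hX]
      · -- k ≥ 1 : |sin θ| ≥ sin (π/r) ≥ m
        have hk1R : (1:ℝ) ≤ k := by exact_mod_cast hk1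
        have hkR : (k:ℝ) ≤ r - 1 := by
          have : (k:ℝ) + 1 ≤ r := by exact_mod_cast hk
          linarith
        have hsinb : Real.sin (Real.pi / r) ≤ |s| := by
          have habs : Real.sin θ ≤ |s| := by rw [hs_def]; exact le_abs_self _
          have habs' : -Real.sin θ ≤ |s| := by rw [hs_def]; exact neg_le_abs _
          rcases lt_trichotomy (2*k) r with hlt | heq | hgt
          · have h2kR : 2*(k:ℝ) + 1 ≤ (r:ℝ) := by exact_mod_cast Nat.succ_le_of_lt hlt
            have h1' : Real.sin (Real.pi / r) ≤ Real.sin θ := by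
              apply sin_min_bound (by positivity)
              · rw [hθ_def]
                apply div_le_div_of_nonneg_right _ hrpos.le
                nlinarith [mul_le_mul_of_nonneg_left hk1R hpi.le]
              · have hsub : Real.pi - Real.pi / r = Real.pi * ((r:ℝ) - 1) / r := by
                  field_simp
                rw [hθ_def, hsub]
                apply div_le_div_of_nonneg_right _ hrpos.le
                nlinarith [mul_le_mul_of_nonneg_left
                  (show 2*(k:ℝ) ≤ (r:ℝ)-1 by linarith) hpi.le]
            exact h1'.trans habs
          · exact absurd heq h2k
          · have h2kR : (r:ℝ) + 1 ≤ 2*(k:ℝ) := by exact_mod_cast hgt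
            have hθπ' : θ - Real.pi = Real.pi * (2*(k:ℝ) - r) / r := by
              rw [hθ_def]; field_simp
            have h1' : Real.sin (Real.pi / r) ≤ Real.sin (θ - Real.pi) := by
              apply sin_min_bound (by positivity)
              · rw [hθπ']
                apply div_le_div_of_nonneg_right _ hrpos.le
                nlinarith [mul_le_mul_of_nonneg_left
                  (show (1:ℝ) ≤ 2*(k:ℝ)-(r:ℝ) by linarith) hpi.le]
              · have hsub : Real.pi - Real.pi / r = Real.pi * ((r:ℝ) - 1) / r := by
                  field_simp
                rw [hθπ', hsub]
                apply div_le_div_of_nonneg_right _ hrpos.le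
                nlinarith [mul_le_mul_of_nonneg_left
                  (show 2*(k:ℝ)-(r:ℝ) ≤ (r:ℝ)-1 by linarith) hpi.le]
            rw [Real.sin_sub_pi] at h1'
            exact h1'.trans habs'
        have hm_le : m ≤ Real.sin (Real.pi / r) := by
          rw [hm_def]
          push_cast
          apply sin_min_bound (by positivity)
          · exact div_le_div_of_nonneg_left hpi.le hrpos (by linarith)
          · have h2 : Real.pi / r + Real.pi / (2*(r:ℝ)) ≤ Real.pi := by
              rw [div_add_div _ _ hr0 (by positivity : 2*(r:ℝ) ≠ 0)]
              rw [div_le_iff₀ (by positivity : (0:ℝ) < (r:ℝ)*(2*(r:ℝ)))]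
              nlinarith [mul_nonneg (mul_nonneg hpi.le hrpos.le) (sub_nonneg.mpr hr2)]
            linarith
        have hcge : -1 ≤ c := by rw [hc_def]; exact Real.neg_one_le_cos θ
        have hs1 : s^2 ≤ 1 := by rw [hs_def]; exact Real.sin_sq_le_one θ
        have hkey : mu*s^2*(a^2+b^2)/7 ≤ b^2 := keyineq hmu0 hmu16 hcge hX hs1 hK
        have hms : m^2 ≤ s^2 := by
          have : m ≤ |s| := le_trans hm_le hsinb
          nlinarith [abs_nonneg s, sq_abs s, hm0.le]
        nlinarith [hkey, mul_pos hmu0 hX, hm0.le]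
    -- conclude
    clear hE1 hK
    have hXabs : ‖ρ‖ ^ 2 = a^2 + b^2 := by
      rw [Complex.sq_norm, Complex.normSq_apply, ← ha, ← hb]; ring
    have hnn : 0 ≤ m/25 * sl * ‖ρ‖ := by positivity
    have hsq : (m/25 * sl * ‖ρ‖)^2 ≤ b^2 := by
      have hexpand : (m/25 * sl * ‖ρ‖)^2 = m^2/625 * sl^2 * (‖ρ‖)^2 := by
        ring
      rw [hexpand, hXabs, hmusq]
      nlinarith [hbb]
    calc m/25 * sl * ‖ρ‖ = Real.sqrt ((m/25 * sl * ‖ρ‖)^2) :=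
          (Real.sqrt_sq hnn).symm
      _ ≤ Real.sqrt (b^2) := Real.sqrt_le_sqrt hsq
      _ = |b| := Real.sqrt_sq_eq_abs b
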